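/- Let G be a finite graph with independence number 2. Suppose V(G) admits a partition {D_1, D_2, D_3} such that each D_i is a clique, D_1 is a maximum clique of G, and the subgraph of G induced on D_2 ∪ D_3 has no induced 4-cycle. Then G contains an immersion of the complete graph on |D_2 ∪ D_3| vertices whose branch vertices are exactly D_2 ∪ D_3, where moreover all connecting paths have length 3 and internal vertices in D_1. -/

import Mathlib

/-- Every three distinct vertices span at least one edge, i.e. the
independence number of `G` is at most `2`. -/
def IndepNumAtMostTwo {V : Type*} (G : SimpleGraph V) : Prop :=
  ∀ a b c : V, a ≠ b → a ≠ c → b ≠ c → G.Adj a b ∨ G.Adj a c ∨ G.Adj b c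

open SimpleGraph

/-- Main structural theorem: if `G` has independence number 2 and admits a
3-clique coloring `{D_1, D_2, D_3}` with `D_1` a maximum clique and no induced
`C_4` in `G[D_2 ∪ D_3]`, then `G` contains an immersion of a complete graph with
branch vertices exactly `D_2 ∪ D_3`, with all nontrivial connecting paths of
length 3 and internal vertices in `D_1`. -/
theorem immersion_of_three_clique_coloring {V : Type*} [Fintype V] [DecidableEq V]
    (G : SimpleGraph V)
    (hα : IndepNumAtMostTwo G) (hnc : ∃ x y : V, x ≠ y ∧ ¬ G.Adj x y)
    (D1 D2 D3 : Finset V)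
    (hpart : Disjoint D1 D2 ∧ Disjoint D1 D3 ∧ Disjoint D2 D3 ∧
      D1 ∪ D2 ∪ D3 = Finset.univ)
    (hD1 : G.IsClique ↑D1) (hD2 : G.IsClique ↑D2) (hD3 : G.IsClique ↑D3)
    (hD1max : ∀ s : Finset V, G.IsClique ↑s → s.card ≤ D1.card)
    (hC4 : ¬ ∃ u u' v v' : V, u ∈ D2 ∪ D3 ∧ u' ∈ D2 ∪ D3 ∧ v ∈ D2 ∪ D3 ∧
      v' ∈ D2 ∪ D3 ∧ u ≠ u' ∧ u ≠ v ∧ u ≠ v' ∧ u' ≠ v ∧ u' ≠ v' ∧ v ≠ v' ∧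
      G.Adj u u' ∧ G.Adj u' v ∧ G.Adj v v' ∧ G.Adj v' u ∧
      ¬ G.Adj u v ∧ ¬ G.Adj u' v') :
    ∃ P : (u : V) → (v : V) → u ∈ D2 ∪ D3 → v ∈ D2 ∪ D3 → u ≠ v → G.Walk u v,
      (∀ u v hu hv h, (P u v hu hv h).IsPath) ∧
      (∀ u v hu hv h, (P u v hu hv h).length = 1 ∨
        ((P u v hu hv h).length = 3 ∧
          ∀ w ∈ (P u v hu hv h).support, w ≠ u → w ≠ v → w ∈ D1)) ∧
      (∀ u v u' v' hu hv h hu' hv' h', s(u, v) ≠ s(u', v') →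
        ∀ e ∈ (P u v hu hv h).edges, e ∉ (P u' v' hu' hv' h').edges) := by
  classical
  obtain ⟨h12, h13, h23, hcover⟩ := hpart
  have ne12 : ∀ {a b : V}, a ∈ D1 → b ∈ D2 → a ≠ b := by
    intro a b ha hb e; exact Finset.disjoint_left.1 h12 ha (e ▸ hb)
  have ne13 : ∀ {a b : V}, a ∈ D1 → b ∈ D3 → a ≠ b := by
    intro a b ha hb e; exact Finset.disjoint_left.1 h13 ha (e ▸ hb)
  have ne23 : ∀ {a b : V}, a ∈ D2 → b ∈ D3 → a ≠ b := by
    intro a b ha hb e; exact Finset.disjoint_left.1 h23 ha (e ▸ hb)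
  have hnd1 : ∀ x ∈ D2 ∪ D3, x ∉ D1 := by
    intro x hx hx1
    rcases Finset.mem_union.1 hx with h | h
    · exact ne12 hx1 h rfl
    · exact ne13 hx1 h rfl
  -- A Hall-type selection: on any clique `D` disjoint from `D1`, we can pick for
  -- each `x ∈ D` a non-neighbor in `D1`, injectively.
  have hall : ∀ D : Finset V, Disjoint D1 D → G.IsClique ↑D →
      ∃ f : V → V, (∀ x ∈ D, f x ∈ D1 ∧ ¬ G.Adj x (f x)) ∧
        (∀ x ∈ D, ∀ y ∈ D, f x = f y → x = y) := by
    intro D hdisj hclq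
    have hHall : ∀ s : Finset {x // x ∈ D},
        s.card ≤ (s.biUnion fun x => D1.filter fun w => ¬ G.Adj x.1 w).card := by
      intro s
      set W := s.biUnion fun x => D1.filter fun w => ¬ G.Adj x.1 w with hW
      have hWD1 : W ⊆ D1 := by
        intro w hw
        rw [hW, Finset.mem_biUnion] at hw
        obtain ⟨x, _, hx⟩ := hw
        exact (Finset.mem_filter.1 hx).1
      have key2 : ∀ {a b : V}, a ∈ D1 \ W → b ∈ s.image Subtype.val → G.Adj b a := by
        intro a b ha hb
        rw [Finset.mem_sdiff] at ha
        rw [Finset.mem_image] at hb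
        obtain ⟨x, hxs, rfl⟩ := hb
        by_contra hadj
        exact ha.2 (by
          rw [hW]
          exact Finset.mem_biUnion.2 ⟨x, hxs, Finset.mem_filter.2 ⟨ha.1, hadj⟩⟩)
      have hclqC : G.IsClique ↑((D1 \ W) ∪ s.image Subtype.val) := by
        intro a ha b hb hne
        rw [Finset.coe_union, Set.mem_union, Finset.mem_coe, Finset.mem_coe] at ha hb
        rcases ha with ha | ha <;> rcases hb with hb | hb
        · exact hD1 (Finset.mem_coe.2 (Finset.mem_sdiff.1 ha).1)
            (Finset.mem_coe.2 (Finset.mem_sdiff.1 hb).1) hne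
        · exact (key2 ha hb).symm
        · exact key2 hb ha
        · rw [Finset.mem_image] at ha hb
          obtain ⟨x, _, rfl⟩ := ha; obtain ⟨y, _, rfl⟩ := hb
          exact hclq (Finset.mem_coe.2 x.2) (Finset.mem_coe.2 y.2) hne
      have hcard := hD1max _ hclqC
      have hdisj2 : Disjoint (D1 \ W) (s.image Subtype.val) := by
        apply Finset.disjoint_of_subset_left Finset.sdiff_subset
        apply Finset.disjoint_of_subset_right _ hdisj
        intro b hb
        rw [Finset.mem_image] at hb
        obtain ⟨x, _, rfl⟩ := hb
        exact x.2
      rw [Finset.card_union_of_disjoint hdisj2, Finset.card_sdiff_of_subset hWD1,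
        Finset.card_image_of_injective _ Subtype.val_injective] at hcard
      have := Finset.card_le_card hWD1
      omega
    obtain ⟨F, hFinj, hFmem⟩ :=
      (Finset.all_card_le_biUnion_card_iff_exists_injective _).1 hHall
    refine ⟨fun x => if h : x ∈ D then F ⟨x, h⟩ else x, ?_, ?_⟩
    · intro x hx
      simp only [dif_pos hx]
      have := hFmem ⟨x, hx⟩
      rw [Finset.mem_filter] at this
      exact this
    · intro x hx y hy e
      simp only [dif_pos hx, dif_pos hy] at e
      exact Subtype.mk_eq_mk.1 (hFinj e)
  obtain ⟨g, hg, hginj⟩ := hall D2 h12 hD2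
  obtain ⟨f, hf, hfinj⟩ := hall D3 h13 hD3
  have htri1 : ∀ p q w : V, ¬G.Adj p q → p ≠ q → p ∉ D1 → q ∉ D1 → w ∈ D1 →
      ¬G.Adj q w → G.Adj p w := by
    intro p q w h0 hne hp hq hw h1
    rcases hα p q w hne (fun e => hp (e ▸ hw)) (fun e => hq (e ▸ hw)) with h | h | h
    · exact absurd h h0
    · exact h
    · exact absurd h h1
  have htri2 : ∀ p q w : V, p ∈ D2 → q ∈ D3 → w ∈ D1 → ¬G.Adj q w → ¬G.Adj p w →
      G.Adj p q := by
    intro p q w hp hq hw h1 h2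
    rcases hα p q w (ne23 hp hq) (Ne.symm (ne12 hw hp)) (Ne.symm (ne13 hw hq)) with h | h | h
    · exact h
    · exact absurd h h2
    · exact absurd h h1
  have hkey : ∀ x y : V, x ∈ D2 → y ∈ D3 → ¬G.Adj x y →
      G.Adj x (f y) ∧ G.Adj (f y) (g x) ∧ G.Adj (g x) y := by
    intro x y hx hy hna
    obtain ⟨hfy1, hfyna⟩ := hf y hy
    obtain ⟨hgx1, hgxna⟩ := hg x hx
    have hxny : x ≠ y := ne23 hx hy
    have hx1 : x ∉ D1 := fun h => ne12 h hx rfl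
    have hy1 : y ∉ D1 := fun h => ne13 h hy rfl
    have h1 : G.Adj x (f y) := htri1 x y (f y) hna hxny hx1 hy1 hfy1 hfyna
    have h3 : G.Adj y (g x) :=
      htri1 y x (g x) (fun h => hna h.symm) hxny.symm hy1 hx1 hgx1 hgxna
    have hne : f y ≠ g x := fun e => hfyna (by rw [e]; exact h3)
    exact ⟨h1, hD1 (Finset.mem_coe.2 hfy1) (Finset.mem_coe.2 hgx1) hne, h3.symm⟩
  have key : ∀ (u v : V) (hu : u ∈ D2 ∪ D3) (hv : v ∈ D2 ∪ D3) (h : u ≠ v),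
      ∃ W : G.Walk u v, W.IsPath ∧
        (W.length = 1 ∨ (W.length = 3 ∧ ∀ w ∈ W.support, w ≠ u → w ≠ v → w ∈ D1)) ∧
        (∀ e ∈ W.edges, (G.Adj u v ∧ e = s(u, v)) ∨
          (∃ x y : V, x ∈ D2 ∧ y ∈ D3 ∧ ¬G.Adj x y ∧ (s(x, y) : Sym2 V) = s(u, v) ∧
            (e = s(x, f y) ∨ e = s(f y, g x) ∨ e = s(g x, y)))) := by
    intro u v hu hv h
    by_cases hadj : G.Adj u v
    · refine ⟨Walk.cons hadj Walk.nil, ?_, ?_, ?_⟩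
      · simp [Walk.isPath_def, h]
      · left; simp
      · intro e he
        simp only [Walk.edges_cons, Walk.edges_nil, List.mem_singleton] at he
        exact Or.inl ⟨hadj, he⟩
    · have horient : (u ∈ D2 ∧ v ∈ D3) ∨ (v ∈ D2 ∧ u ∈ D3) := by
        rcases Finset.mem_union.1 hu with h2 | h3
        · rcases Finset.mem_union.1 hv with h2' | h3'
          · exact absurd (hD2 (Finset.mem_coe.2 h2) (Finset.mem_coe.2 h2') h) hadj
          · exact Or.inl ⟨h2, h3'⟩
        · rcases Finset.mem_union.1 hv with h2' | h3'
          · exact Or.inr ⟨h2', h3⟩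
          · exact absurd (hD3 (Finset.mem_coe.2 h3) (Finset.mem_coe.2 h3') h) hadj
      rcases horient with ⟨hu2, hv3⟩ | ⟨hv2, hu3⟩
      · obtain ⟨k1, k2, k3⟩ := hkey u v hu2 hv3 hadj
        have n1 : u ≠ f v := k1.ne
        have n2 : u ≠ g u := (ne12 (hg u hu2).1 hu2).symm
        have n4 : f v ≠ g u := k2.ne
        have n5 : f v ≠ v := ne13 (hf v hv3).1 hv3
        have n6 : g u ≠ v := k3.ne
        refine ⟨Walk.cons k1 (Walk.cons k2 (Walk.cons k3 Walk.nil)), ?_, ?_, ?_⟩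
        · simp [Walk.isPath_def, List.nodup_cons, n1, n2, h, n4, n5, n6]
        · refine Or.inr ⟨by simp, ?_⟩
          intro w hw hwu hwv
          simp only [Walk.support_cons, Walk.support_nil, List.mem_cons,
            List.mem_singleton] at hw
          rcases hw with rfl | rfl | rfl | hw
          · exact absurd rfl hwu
          · exact (hf v hv3).1
          · exact (hg u hu2).1
          · rcases hw with rfl | hw
            · exact absurd rfl hwv
            · exact absurd hw List.not_mem_nil
        · intro e he
          simp only [Walk.edges_cons, Walk.edges_nil, List.mem_cons,
            List.not_mem_nil, or_false, List.mem_singleton] at he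
          exact Or.inr ⟨u, v, hu2, hv3, hadj, rfl, he⟩
      · have hadj' : ¬G.Adj v u := fun h' => hadj h'.symm
        obtain ⟨k1, k2, k3⟩ := hkey v u hv2 hu3 hadj'
        have n1 : u ≠ g v := k3.ne.symm
        have n2 : u ≠ f u := (ne13 (hf u hu3).1 hu3).symm
        have n4 : g v ≠ f u := k2.ne.symm
        have n5 : g v ≠ v := ne12 (hg v hv2).1 hv2
        have n6 : f u ≠ v := k1.ne.symm
        refine ⟨Walk.cons k3.symm (Walk.cons k2.symm (Walk.cons k1.symm Walk.nil)),
          ?_, ?_, ?_⟩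
        · simp [Walk.isPath_def, List.nodup_cons, n1, n2, h, n4, n5, n6]
        · refine Or.inr ⟨by simp, ?_⟩
          intro w hw hwu hwv
          simp only [Walk.support_cons, Walk.support_nil, List.mem_cons,
            List.mem_singleton] at hw
          rcases hw with rfl | rfl | rfl | hw
          · exact absurd rfl hwu
          · exact (hg v hv2).1
          · exact (hf u hu3).1
          · rcases hw with rfl | hw
            · exact absurd rfl hwv
            · exact absurd hw List.not_mem_nil
        · intro e he
          simp only [Walk.edges_cons, Walk.edges_nil, List.mem_cons,
            List.not_mem_nil, or_false, List.mem_singleton] at he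
          refine Or.inr ⟨v, u, hv2, hu3, hadj', Sym2.eq_swap, ?_⟩
          rcases he with rfl | rfl | rfl
          · exact Or.inr (Or.inr Sym2.eq_swap)
          · exact Or.inr (Or.inl Sym2.eq_swap)
          · exact Or.inl Sym2.eq_swap
  choose P h1 h2 h3 using key
  refine ⟨P, h1, h2, ?_⟩
  intro u v u' v' hu hv h hu' hv' h' hsne e he he'
  have d := h3 u v hu hv h e he
  have d' := h3 u' v' hu' hv' h' e he'
  have hu1 : u ∉ D1 := hnd1 u hu
  have hv1 : v ∉ D1 := hnd1 v hv
  have hu'1 : u' ∉ D1 := hnd1 u' hu'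
  have hv'1 : v' ∉ D1 := hnd1 v' hv'
  rcases d with ⟨hadjd, heq⟩ | ⟨x, y, hx, hy, hxy, hsxy, he1⟩
  · rcases d' with ⟨hadjd', heq'⟩ | ⟨x', y', hx', hy', hxy', hsxy', he1'⟩
    · exact hsne ((heq.symm.trans heq'))
    · obtain ⟨hfy'1, hfy'na⟩ := hf y' hy'
      obtain ⟨hgx'1, hgx'na⟩ := hg x' hx'
      rcases he1' with h' | h' | h' <;>
        rcases Sym2.eq_iff.1 (heq.symm.trans h') with ⟨e1, e2⟩ | ⟨e1, e2⟩
      · exact hv1 (by rw [e2]; exact hfy'1)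
      · exact hu1 (by rw [e1]; exact hfy'1)
      · exact hu1 (by rw [e1]; exact hfy'1)
      · exact hu1 (by rw [e1]; exact hgx'1)
      · exact hu1 (by rw [e1]; exact hgx'1)
      · exact hv1 (by rw [e2]; exact hgx'1)
  · obtain ⟨hfy1, hfyna⟩ := hf y hy
    obtain ⟨hgx1, hgxna⟩ := hg x hx
    rcases d' with ⟨hadjd', heq'⟩ | ⟨x', y', hx', hy', hxy', hsxy', he1'⟩
    · rcases he1 with h'' | h'' | h'' <;>
        rcases Sym2.eq_iff.1 (heq'.symm.trans h'') with ⟨e1, e2⟩ | ⟨e1, e2⟩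
      · exact hv'1 (by rw [e2]; exact hfy1)
      · exact hu'1 (by rw [e1]; exact hfy1)
      · exact hu'1 (by rw [e1]; exact hfy1)
      · exact hu'1 (by rw [e1]; exact hgx1)
      · exact hu'1 (by rw [e1]; exact hgx1)
      · exact hv'1 (by rw [e2]; exact hgx1)
    · obtain ⟨hfy'1, hfy'na⟩ := hf y' hy'
      obtain ⟨hgx'1, hgx'na⟩ := hg x' hx'
      have hne_pairs : ¬(x = x' ∧ y = y') := by
        rintro ⟨rfl, rfl⟩
        exact hsne (by rw [← hsxy, ← hsxy'])
      rcases he1 with rfl | rfl | rfl <;> rcases he1' with h'' | h'' | h''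
      -- (1,1)
      · rcases Sym2.eq_iff.1 h'' with ⟨e1, e2⟩ | ⟨e1, e2⟩
        · exact hne_pairs ⟨e1, hfinj y hy y' hy' e2⟩
        · exact ne12 hfy'1 hx e1.symm
      -- (1,2)
      · rcases Sym2.eq_iff.1 h'' with ⟨e1, e2⟩ | ⟨e1, e2⟩
        · exact ne12 hfy'1 hx e1.symm
        · exact ne12 hgx'1 hx e1.symm
      -- (1,3)
      · rcases Sym2.eq_iff.1 h'' with ⟨e1, e2⟩ | ⟨e1, e2⟩
        · exact ne12 hgx'1 hx e1.symm
        · exact ne23 hx hy' e1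
      -- (2,1)
      · rcases Sym2.eq_iff.1 h'' with ⟨e1, e2⟩ | ⟨e1, e2⟩
        · exact ne12 hfy1 hx' e1
        · exact ne12 hgx1 hx' e2
      -- (2,2): the central case
      · rcases Sym2.eq_iff.1 h'' with ⟨e1, e2⟩ | ⟨e1, e2⟩
        · exact hne_pairs ⟨hginj x hx x' hx' e2, hfinj y hy y' hy' e1⟩
        · -- e1 : f y = g x', e2 : g x = f y'
          have hA : G.Adj x' y :=
            htri2 x' y (f y) hx' hy hfy1 hfyna (by rw [e1]; exact hgx'na)
          have hB : G.Adj x y' :=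
            htri2 x y' (g x) hx hy' hgx1 (by rw [e2]; exact hfy'na) hgxna
          have hxx' : x ≠ x' := by
            rintro rfl
            exact hne_pairs ⟨rfl, hfinj y hy y' hy' (e1.trans e2)⟩
          have hyy' : y ≠ y' := by
            rintro rfl
            exact hne_pairs ⟨hginj x hx x' hx' (e2.trans e1), rfl⟩
          exact hC4 ⟨x, x', y, y', Finset.mem_union_left _ hx,
            Finset.mem_union_left _ hx', Finset.mem_union_right _ hy,
            Finset.mem_union_right _ hy', hxx', ne23 hx hy, ne23 hx hy',
            ne23 hx' hy, ne23 hx' hy', hyy',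
            hD2 (Finset.mem_coe.2 hx) (Finset.mem_coe.2 hx') hxx', hA,
            hD3 (Finset.mem_coe.2 hy) (Finset.mem_coe.2 hy') hyy', hB.symm,
            hxy, hxy'⟩
      -- (2,3)
      · rcases Sym2.eq_iff.1 h'' with ⟨e1, e2⟩ | ⟨e1, e2⟩
        · exact ne13 hgx1 hy' e2
        · exact ne13 hfy1 hy' e1
      -- (3,1)
      · rcases Sym2.eq_iff.1 h'' with ⟨e1, e2⟩ | ⟨e1, e2⟩
        · exact ne12 hgx1 hx' e1
        · exact ne23 hx' hy e2.symm
      -- (3,2)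
      · rcases Sym2.eq_iff.1 h'' with ⟨e1, e2⟩ | ⟨e1, e2⟩
        · exact ne13 hgx'1 hy e2.symm
        · exact ne13 hfy'1 hy e2.symm
      -- (3,3)
      · rcases Sym2.eq_iff.1 h'' with ⟨e1, e2⟩ | ⟨e1, e2⟩
        · exact hne_pairs ⟨hginj x hx x' hx' e1, e2⟩
        · exact ne13 hgx1 hy' e1
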